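/- arXiv:2510.04836 — 4 statements merged into one kernel-verified Lean document; each statement's English description precedes it below -/
import Mathlib

section
/- Let A be a unital C*-algebra and let x, y ∈ A be self-adjoint. Then the Hausdorff distance between σ(x) and σ(y) (viewed as nonempty compact subsets of ℝ, or equivalently of ℂ) is at most ‖x − y‖. -/
open Metric ENNReal

private lemma infDist_spectrum_le_norm_sub
    {A : Type*} [NormedRing A] [StarRing A] [CStarRing A] [CompleteSpace A]
    [NormedAlgebra ℂ A] [StarModule ℂ A] [Nontrivial A]
    (x y : A) (hy : IsSelfAdjoint y) {l : ℝ} (hl : l ∈ spectrum ℝ x) :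
    Metric.infDist l (spectrum ℝ y) ≤ ‖x - y‖ := by
  letI : CStarAlgebra A := { }
  by_contra hcon
  push_neg at hcon
  set r := Metric.infDist l (spectrum ℝ y) with hr
  have hr0 : 0 < r := lt_of_le_of_lt (norm_nonneg _) hcon
  have hl' : l ∉ spectrum ℝ y := by
    intro hmem
    have h0 := Metric.infDist_le_dist_of_mem (x := l) hmem
    rw [dist_self] at h0
    linarith
  have ha : IsUnit (algebraMap ℝ A l - y) := spectrum.notMem_iff.mp hl'
  set u := ha.unit with hu
  have huspec : (↑u : A) = algebraMap ℝ A l - y := ha.unit_spec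
  have hsa : IsSelfAdjoint (algebraMap ℝ A l - y) :=
    (IsSelfAdjoint.algebraMap A (.all l)).sub hy
  have hsainv : IsSelfAdjoint ((↑u⁻¹ : A)) := by
    rw [← Ring.inverse_unit]
    have hstar : star (↑u : A) = ↑u := by rw [huspec]; exact hsa.star_eq
    unfold IsSelfAdjoint
    rw [← Ring.inverse_star, hstar]
  -- every element of the spectrum of u has absolute value at least r
  have hspec_lb : ∀ ν ∈ spectrum ℝ (↑u : A), r ≤ |ν| := by
    intro ν hν
    rw [huspec, ← spectrum.singleton_sub_eq] at hν
    obtain ⟨c, hc, b, hb, rfl⟩ := hν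
    rw [Set.mem_singleton_iff] at hc
    have h2 : Metric.infDist l (spectrum ℝ y) ≤ dist l b := Metric.infDist_le_dist_of_mem hb
    rw [Real.dist_eq] at h2
    rw [hc]
    exact h2
  -- spectral radius bound for u⁻¹
  have hspecrad : spectralRadius ℝ (↑u⁻¹ : A) ≤ ENNReal.ofReal r⁻¹ := by
    apply iSup₂_le
    intro k hk
    rw [← spectrum.map_inv, Set.mem_inv] at hk
    have hk' : r ≤ |k⁻¹| := hspec_lb _ hk
    have habs : ‖k‖ ≤ r⁻¹ := by
      rcases eq_or_ne k 0 with rfl | hk0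
      · simpa using (inv_nonneg.mpr hr0.le)
      · rw [Real.norm_eq_abs]
        rw [abs_inv] at hk'
        calc |k| = (|k|⁻¹)⁻¹ := by rw [inv_inv]
          _ ≤ r⁻¹ := by
              exact inv_anti₀ hr0 hk'
    calc (‖k‖₊ : ℝ≥0∞) = ENNReal.ofReal ‖k‖ := (ofReal_norm k).symm
      _ ≤ ENNReal.ofReal r⁻¹ := ENNReal.ofReal_le_ofReal habs
  have hnorm : ‖(↑u⁻¹ : A)‖ ≤ r⁻¹ := by
    rw [← hsainv.toReal_spectralRadius_eq_norm]
    calc (spectralRadius ℝ (↑u⁻¹ : A)).toReal ≤ (ENNReal.ofReal r⁻¹).toReal :=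
          ENNReal.toReal_mono (by simp) hspecrad
      _ = r⁻¹ := ENNReal.toReal_ofReal (by positivity)
  have hlt : ‖(↑u⁻¹ : A) * (x - y)‖ < 1 := by
    calc ‖(↑u⁻¹ : A) * (x - y)‖ ≤ ‖(↑u⁻¹ : A)‖ * ‖x - y‖ := norm_mul_le _ _
      _ ≤ r⁻¹ * ‖x - y‖ := by
          exact mul_le_mul_of_nonneg_right hnorm (norm_nonneg _)
      _ < r⁻¹ * r := by
          exact mul_lt_mul_of_pos_left hcon (by positivity)
      _ = 1 := inv_mul_cancel₀ hr0.ne'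
  have h1 : IsUnit (1 - (↑u⁻¹ : A) * (x - y)) := (Units.oneSub _ hlt).isUnit
  have heq : algebraMap ℝ A l - x = ↑u * (1 - (↑u⁻¹ : A) * (x - y)) := by
    rw [mul_sub, mul_one, ← mul_assoc, u.mul_inv, one_mul, huspec]
    abel
  have hunit : IsUnit (algebraMap ℝ A l - x) := heq ▸ u.isUnit.mul h1
  exact spectrum.mem_iff.mp hl hunit

/-- For self-adjoint elements `x, y` of a unital C*-algebra, the Hausdorff
distance between their (real) spectra is at most `‖x - y‖`. -/
theorem hausdorffDist_spectrum_le_norm_sub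
    {A : Type*} [NormedRing A] [StarRing A] [CStarRing A] [CompleteSpace A]
    [NormedAlgebra ℂ A] [StarModule ℂ A] [Nontrivial A]
    (x y : A) (hx : IsSelfAdjoint x) (hy : IsSelfAdjoint y) :
    Metric.hausdorffDist (spectrum ℝ x) (spectrum ℝ y) ≤ ‖x - y‖ := by
  apply Metric.hausdorffDist_le_of_infDist (norm_nonneg _)
  · exact fun l hl => infDist_spectrum_le_norm_sub x y hy hl
  · intro l hl
    rw [norm_sub_rev]
    exact infDist_spectrum_le_norm_sub y x hx hl
end

section
/- Let A be a unital C*-algebra and let τ be a tracial state on A. Let r > 0, let (x_n) be a sequence of self-adjoint elements of A and x ∈ A self-adjoint with ‖x_n‖ ≤ r for all n, ‖x‖ ≤ r, and τ((x_n − x)*(x_n − x)) → 0. Then for every continuous function f : ℝ → ℝ, τ(cfc f x_n) → τ(cfc f x) as n → ∞, where cfc f a denotes the continuous functional calculus of f applied to the self-adjoint element a. -/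
open Filter
open scoped ComplexOrder

section Aux
variable {A : Type*} [CStarAlgebra A] [PartialOrder A] [StarOrderedRing A] (τ : A →ₗ[ℂ] ℂ)

lemma auxT_nonneg (hpos : ∀ a : A, 0 ≤ τ (star a * a)) {a : A} (ha : 0 ≤ a) :
    0 ≤ τ a := by
  have h1 : star (CFC.sqrt a) * CFC.sqrt a = a := by
    rw [(IsSelfAdjoint.of_nonneg (CFC.sqrt_nonneg a)).star_eq, CFC.sqrt_mul_sqrt_self a ha]
  simpa [h1] using hpos (CFC.sqrt a)

lemma auxT_mono (hpos : ∀ a : A, 0 ≤ τ (star a * a)) {a b : A} (hab : a ≤ b) :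
    τ a ≤ τ b := by
  have h := auxT_nonneg τ hpos (sub_nonneg.mpr hab)
  rwa [map_sub, sub_nonneg] at h

lemma auxT_im (hpos : ∀ a : A, 0 ≤ τ (star a * a)) (c : A) :
    (τ (star c * c)).im = 0 :=
  ((Complex.le_def.mp (hpos c)).2).symm

lemma auxT_herm (hpos : ∀ a : A, 0 ≤ τ (star a * a)) (a b : A) :
    τ (star b * a) = starRingEnd ℂ (τ (star a * b)) := by
  have expand1 : star (a + b) * (a + b)
      = star a * a + (star a * b + (star b * a + star b * b)) := by
    rw [star_add]; noncomm_ring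
  have h1 := auxT_im τ hpos (a + b)
  rw [expand1, map_add, map_add, map_add] at h1
  simp only [Complex.add_im, auxT_im τ hpos a, auxT_im τ hpos b] at h1
  have expand2 : star (a + Complex.I • b) * (a + Complex.I • b)
      = star a * a + (star b * b + (Complex.I • (star a * b) - Complex.I • (star b * a))) := by
    rw [star_add, star_smul, Complex.star_def, Complex.conj_I]
    simp only [neg_smul, smul_mul_assoc, mul_smul_comm, smul_smul, add_mul, mul_add,
      Complex.I_mul_I, neg_neg, one_smul, neg_mul, smul_add, smul_sub]
    match_scalars <;> simp [Complex.I_sq]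
  have h2 := auxT_im τ hpos (a + Complex.I • b)
  rw [expand2, map_add, map_add, map_sub, map_smul, map_smul] at h2
  simp only [Complex.add_im, Complex.sub_im, smul_eq_mul, auxT_im τ hpos a,
    auxT_im τ hpos b, Complex.mul_im, Complex.I_re, Complex.I_im] at h2
  apply Complex.ext <;>
    simp only [Complex.conj_re, Complex.conj_im] <;> linarith
end Aux

section Aux2
variable {A : Type*} [CStarAlgebra A] [PartialOrder A] [StarOrderedRing A] (τ : A →ₗ[ℂ] ℂ)

lemma auxT_cs (hpos : ∀ a : A, 0 ≤ τ (star a * a)) (a b : A) :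
    ‖τ (star a * b)‖ ^ 2 ≤ (τ (star a * a)).re * (τ (star b * b)).re := by
  letI P : PreInnerProductSpace.Core ℂ A :=
  { inner := fun u v => τ (star u * v)
    conj_inner_symm := fun u v => show starRingEnd ℂ (τ (star v * u)) = τ (star u * v) by
      rw [auxT_herm τ hpos u v, Complex.conj_conj]
    re_inner_nonneg := fun u => by
      simpa using (Complex.le_def.mp (hpos u)).1
    add_left := fun u v w => show τ (star (u + v) * w) = τ (star u * w) + τ (star v * w) by
      rw [star_add, add_mul, map_add]
    smul_left := fun u v c => show τ (star (c • u) * v) = starRingEnd ℂ c * τ (star u * v) by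
      rw [star_smul, smul_mul_assoc, map_smul, smul_eq_mul]
      rfl }
  have h := @InnerProductSpace.Core.inner_mul_inner_self_le ℂ A _ _ _ P a b
  simp only [RCLike.re_to_complex] at h
  have hba : P.inner b a = starRingEnd ℂ (P.inner a b) := auxT_herm τ hpos a b
  have h' : ‖P.inner a b‖ * ‖P.inner b a‖ ≤ (τ (star a * a)).re * (τ (star b * b)).re := h
  rw [hba, RCLike.norm_conj] at h'
  calc ‖τ (star a * b)‖ ^ 2 = ‖P.inner a b‖ * ‖P.inner a b‖ := by
        rw [sq]; rfl
    _ ≤ _ := h'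

lemma auxT_re_le (hτ1 : τ 1 = 1) (hpos : ∀ a : A, 0 ≤ τ (star a * a)) (a : A) :
    (τ (star a * a)).re ≤ ‖a‖ ^ 2 := by
  have h := auxT_mono τ hpos (CStarAlgebra.star_mul_le_algebraMap_norm_sq (a := a))
  have e : τ (algebraMap ℝ A (‖a‖ ^ 2)) = ((‖a‖ ^ 2 : ℝ) : ℂ) := by
    rw [Algebra.algebraMap_eq_smul_one, LinearMap.map_smul_of_tower, hτ1]
    simp [Complex.real_smul]
  rw [e] at h
  have h2 := (Complex.le_def.mp h).1
  rwa [Complex.ofReal_re] at h2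

lemma auxT_norm_le (hτ1 : τ 1 = 1) (hpos : ∀ a : A, 0 ≤ τ (star a * a)) (a : A) :
    ‖τ a‖ ≤ ‖a‖ := by
  have h := auxT_cs τ hpos 1 a
  simp only [star_one, one_mul, mul_one, hτ1, Complex.one_re] at h
  have h2 := auxT_re_le τ hτ1 hpos a
  nlinarith [norm_nonneg (τ a), norm_nonneg a]

lemma auxT_prod (hpos : ∀ a : A, 0 ≤ τ (star a * a))
    (htr : ∀ a b : A, τ (a * b) = τ (b * a)) (b w : A) :
    (τ (star (b * w) * (b * w))).re ≤ ‖w‖ ^ 2 * (τ (star b * b)).re := by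
  set X := star b * b with hX
  have hX0 : 0 ≤ X := star_mul_self_nonneg b
  set s := CFC.sqrt X with hs
  have hss : s * s = X := CFC.sqrt_mul_sqrt_self X hX0
  have hsa : star s = s := (IsSelfAdjoint.of_nonneg (CFC.sqrt_nonneg _)).star_eq
  have e1 : star (b * w) * (b * w) = (star w * s) * (s * w) := by
    rw [star_mul]
    calc star w * star b * (b * w) = star w * (star b * b) * w := by noncomm_ring
      _ = star w * (s * s) * w := by rw [hss]
      _ = (star w * s) * (s * w) := by noncomm_ring
  have e2 : τ ((star w * s) * (s * w)) = τ (s * (w * star w) * star s) := by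
    rw [htr]
    congr 1
    rw [hsa]
    noncomm_ring
  have key := auxT_mono τ hpos
    (star_right_conjugate_le_conjugate (CStarAlgebra.mul_star_le_algebraMap_norm_sq (a := w)) s)
  have e3 : s * algebraMap ℝ A (‖w‖ ^ 2) * star s = (‖w‖ ^ 2 : ℝ) • X := by
    rw [hsa, Algebra.algebraMap_eq_smul_one, mul_smul_comm, mul_one, smul_mul_assoc, hss]
  rw [e3, LinearMap.map_smul_of_tower] at key
  have := (Complex.le_def.mp key).1
  rw [e1, e2]
  rw [Complex.real_smul, Complex.re_ofReal_mul] at this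
  exact this

lemma auxT_triple (hτ1 : τ 1 = 1) (hpos : ∀ a : A, 0 ≤ τ (star a * a))
    (htr : ∀ a b : A, τ (a * b) = τ (b * a)) (u b w : A) :
    ‖τ (u * b * w)‖ ≤ ‖u‖ * ‖w‖ * Real.sqrt ((τ (star b * b)).re) := by
  have hre0 : 0 ≤ (τ (star b * b)).re := by simpa using (Complex.le_def.mp (hpos b)).1
  have hre2 : 0 ≤ (τ (star (b * w) * (b * w))).re := by
    simpa using (Complex.le_def.mp (hpos (b * w))).1
  have h := auxT_cs τ hpos (star u) (b * w)
  rw [star_star] at h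
  have h1 : (τ (u * star u)).re ≤ ‖u‖ ^ 2 := by
    have := auxT_re_le τ hτ1 hpos (star u)
    simpa [norm_star] using this
  have h1' : 0 ≤ (τ (u * star u)).re := by
    have := (Complex.le_def.mp (hpos (star u))).1
    simpa using this
  have h2 := auxT_prod τ hpos htr b w
  have hs : Real.sqrt ((τ (star b * b)).re) ^ 2 = (τ (star b * b)).re := Real.sq_sqrt hre0
  have hfin : ‖τ (u * b * w)‖ ^ 2 ≤ (‖u‖ * ‖w‖ * Real.sqrt ((τ (star b * b)).re)) ^ 2 := by
    rw [mul_pow, mul_pow, hs, mul_assoc u b w]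
    nlinarith [norm_nonneg u, norm_nonneg w, sq_nonneg ‖u‖, sq_nonneg ‖w‖, h, h1, h2, h1', hre2]
  nlinarith [norm_nonneg (τ (u * b * w)),
    mul_nonneg (mul_nonneg (norm_nonneg u) (norm_nonneg w)) (Real.sqrt_nonneg ((τ (star b * b)).re))]

end Aux2

lemma auxT_telescope {R : Type*} [Ring R] (x y : R) (k : ℕ) :
    x ^ k - y ^ k = ∑ i ∈ Finset.range k, x ^ i * (x - y) * y ^ (k - 1 - i) := by
  induction k with
  | zero => simp
  | succ k ih =>
    rw [Finset.sum_range_succ]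
    have hcongr : ∑ i ∈ Finset.range k, x ^ i * (x - y) * y ^ (k + 1 - 1 - i)
        = (∑ i ∈ Finset.range k, x ^ i * (x - y) * y ^ (k - 1 - i)) * y := by
      rw [Finset.sum_mul]
      refine Finset.sum_congr rfl fun i hi => ?_
      rw [Finset.mem_range] at hi
      rw [mul_assoc (x ^ i * (x - y)), ← pow_succ]
      congr 2
      omega
    rw [hcongr, ← ih]
    have h0 : k + 1 - 1 - k = 0 := by omega
    rw [h0, pow_zero, mul_one, pow_succ x k, pow_succ y k]
    noncomm_ring

/-- Norm-bounded 2-norm convergence of self-adjoint elements with respect to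
a tracial state forces convergence of `τ (f(x n))` to `τ (f(x))` for every
continuous `f : ℝ → ℝ`, via the continuous functional calculus. -/
theorem tendsto_trace_cfc_of_tendsto_twoNorm
    {A : Type*} [CStarAlgebra A]
    (τ : A →ₗ[ℂ] ℂ) (hτ1 : τ 1 = 1)
    (hpos : ∀ a : A, 0 ≤ τ (star a * a))
    (htr : ∀ a b : A, τ (a * b) = τ (b * a))
    (r : ℝ) (hr : 0 < r)
    (x : ℕ → A) (hx : ∀ n, IsSelfAdjoint (x n)) (hxr : ∀ n, ‖x n‖ ≤ r)
    (xlim : A) (hxlim : IsSelfAdjoint xlim) (hxlimr : ‖xlim‖ ≤ r)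
    (hconv : Tendsto (fun n => τ (star (x n - xlim) * (x n - xlim)))
      atTop (nhds 0))
    (f : ℝ → ℝ) (hf : Continuous f) :
    Tendsto (fun n => τ (cfc f (x n))) atTop (nhds (τ (cfc f xlim))) := by
  letI := CStarAlgebra.spectralOrder A
  haveI := CStarAlgebra.spectralOrderedRing A
  haveI : Nontrivial A := ⟨⟨1, 0, fun h => by rw [h, map_zero] at hτ1; exact one_ne_zero hτ1.symm⟩⟩
  -- the trace 2-seminorm of the differences
  have hδ0 : ∀ n, (0:ℝ) ≤ Real.sqrt ((τ (star (x n - xlim) * (x n - xlim))).re) :=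
    fun n => Real.sqrt_nonneg _
  have hδlim : Tendsto (fun n => Real.sqrt ((τ (star (x n - xlim) * (x n - xlim))).re))
      atTop (nhds 0) := by
    have h1 : Tendsto (fun n => (τ (star (x n - xlim) * (x n - xlim))).re) atTop (nhds 0) := by
      have := (Complex.continuous_re.tendsto 0).comp hconv
      simpa [Function.comp_def] using this
    have := (Real.continuous_sqrt.tendsto 0).comp h1
    simpa [Function.comp_def] using this
  have hnp : ∀ (a : A) (i : ℕ), ‖a ^ i‖ ≤ ‖a‖ ^ i := by
    intro a i
    rcases Nat.eq_zero_or_pos i with h | h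
    · subst h; simp
    · exact norm_pow_le' a h
  -- convergence for monomials
  have hpow : ∀ k : ℕ, Tendsto (fun n => τ (x n ^ k)) atTop (nhds (τ (xlim ^ k))) := by
    intro k
    rw [tendsto_iff_norm_sub_tendsto_zero]
    apply squeeze_zero (g := fun n => (k : ℝ) *
        (r ^ (k - 1) * Real.sqrt ((τ (star (x n - xlim) * (x n - xlim))).re)))
      (fun n => norm_nonneg _)
    · intro n
      have e : τ (x n ^ k) - τ (xlim ^ k)
          = ∑ i ∈ Finset.range k, τ (x n ^ i * (x n - xlim) * xlim ^ (k - 1 - i)) := by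
        rw [← map_sub, auxT_telescope (x n) xlim k, map_sum]
      rw [e]
      calc ‖∑ i ∈ Finset.range k, τ (x n ^ i * (x n - xlim) * xlim ^ (k - 1 - i))‖
          ≤ ∑ i ∈ Finset.range k, ‖τ (x n ^ i * (x n - xlim) * xlim ^ (k - 1 - i))‖ :=
            norm_sum_le _ _
        _ ≤ ∑ i ∈ Finset.range k,
              r ^ (k - 1) * Real.sqrt ((τ (star (x n - xlim) * (x n - xlim))).re) := by
            refine Finset.sum_le_sum fun i hi => ?_
            rw [Finset.mem_range] at hi
            refine (auxT_triple τ hτ1 hpos htr _ _ _).trans ?_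
            have b1 : ‖x n ^ i‖ ≤ r ^ i := (hnp _ i).trans
              (pow_le_pow_left₀ (norm_nonneg _) (hxr n) i)
            have b2 : ‖xlim ^ (k - 1 - i)‖ ≤ r ^ (k - 1 - i) := (hnp _ _).trans
              (pow_le_pow_left₀ (norm_nonneg _) hxlimr _)
            have key : ‖x n ^ i‖ * ‖xlim ^ (k - 1 - i)‖ ≤ r ^ (k - 1) := by
              have hik : i + (k - 1 - i) = k - 1 := by omega
              calc ‖x n ^ i‖ * ‖xlim ^ (k - 1 - i)‖ ≤ r ^ i * r ^ (k - 1 - i) := by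
                    exact mul_le_mul b1 b2 (norm_nonneg _) (by positivity)
                _ = r ^ (k - 1) := by rw [← pow_add, hik]
            exact mul_le_mul_of_nonneg_right key (hδ0 n)
        _ = (k : ℝ) * (r ^ (k - 1) * Real.sqrt ((τ (star (x n - xlim) * (x n - xlim))).re)) := by
            rw [Finset.sum_const, Finset.card_range, nsmul_eq_mul]
    · simpa [mul_assoc] using hδlim.const_mul ((k : ℝ) * r ^ (k - 1))
  -- convergence for polynomials
  have hpoly : ∀ p : Polynomial ℝ, Tendsto (fun n => τ (Polynomial.aeval (x n) p)) atTop
      (nhds (τ (Polynomial.aeval xlim p))) := by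
    intro p
    have e : ∀ a : A, τ (Polynomial.aeval a p)
        = ∑ i ∈ Finset.range (p.natDegree + 1), p.coeff i • τ (a ^ i) := by
      intro a
      rw [Polynomial.aeval_eq_sum_range, map_sum]
      exact Finset.sum_congr rfl fun i _ => τ.map_smul_of_tower _ _
    simp only [e]
    exact tendsto_finset_sum _ fun i _ => (hpow i).const_smul (p.coeff i)
  -- the ε/4 argument
  rw [Metric.tendsto_atTop]
  intro ε hε
  obtain ⟨p, hp⟩ := exists_polynomial_near_of_continuousOn (-r) r f hf.continuousOn
    (ε / 4) (by positivity)
  have hcfc : ∀ a : A, IsSelfAdjoint a → ‖a‖ ≤ r →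
      ‖cfc f a - Polynomial.aeval a p‖ ≤ ε / 4 := by
    intro a ha har
    rw [← cfc_polynomial p a ha,
      ← cfc_sub f (fun t => Polynomial.eval t p) a hf.continuousOn
        (p.continuous_aeval.continuousOn)]
    refine norm_cfc_le (by positivity) fun t ht => ?_
    have h1 : ‖t‖ ≤ ‖a‖ := spectrum.norm_le_norm_of_mem ht
    rw [Real.norm_eq_abs] at h1
    have h2 : t ∈ Set.Icc (-r) r := by
      have := abs_le.mp (h1.trans har)
      exact ⟨this.1, this.2⟩
    rw [Real.norm_eq_abs, abs_sub_comm]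
    exact (hp t h2).le
  obtain ⟨N, hN⟩ := (Metric.tendsto_atTop.mp (hpoly p)) (ε / 4) (by positivity)
  refine ⟨N, fun n hn => ?_⟩
  have b1 : ‖τ (cfc f (x n)) - τ (Polynomial.aeval (x n) p)‖ ≤ ε / 4 := by
    rw [← map_sub]
    exact (auxT_norm_le τ hτ1 hpos _).trans (hcfc (x n) (hx n) (hxr n))
  have b3 : ‖τ (Polynomial.aeval xlim p) - τ (cfc f xlim)‖ ≤ ε / 4 := by
    rw [← map_sub]
    refine (auxT_norm_le τ hτ1 hpos _).trans ?_
    rw [norm_sub_rev]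
    exact hcfc xlim hxlim hxlimr
  have b2 := hN n hn
  rw [dist_eq_norm] at b2 ⊢
  calc ‖τ (cfc f (x n)) - τ (cfc f xlim)‖
      ≤ ‖τ (cfc f (x n)) - τ (Polynomial.aeval (x n) p)‖
        + ‖τ (Polynomial.aeval (x n) p) - τ (cfc f xlim)‖ := norm_sub_le_norm_sub_add_norm_sub _ _ _
    _ ≤ ‖τ (cfc f (x n)) - τ (Polynomial.aeval (x n) p)‖
        + (‖τ (Polynomial.aeval (x n) p) - τ (Polynomial.aeval xlim p)‖
          + ‖τ (Polynomial.aeval xlim p) - τ (cfc f xlim)‖) := by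
        gcongr
        exact norm_sub_le_norm_sub_add_norm_sub _ _ _
    _ < ε := by linarith
end

section
/- Let A be a unital C*-algebra and let τ be a faithful tracial state on A. Let r > 0, let (x_n) be a sequence of self-adjoint elements of A and x ∈ A self-adjoint with ‖x_n‖ ≤ r for all n, ‖x‖ ≤ r, and τ((x_n − x)*(x_n − x)) → 0. Let λ₁, λ₂, λ₃ ∈ σ(x) be pairwise distinct and let ε > 0. Then there exists N such that for all n ≥ N and each i ∈ {1,2,3}, σ(x_n) ∩ (λᵢ − ε, λᵢ + ε) ≠ ∅. In particular, if ε < (1/2)·min_{i≠j} |λᵢ − λⱼ|, then for all n ≥ N the spectrum σ(x_n) contains at least three distinct points. -/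
open Filter
open scoped ComplexOrder

section NuAux

variable {A : Type*} [CStarAlgebra A] [PartialOrder A] [StarOrderedRing A]

/-- The squared 2-seminorm associated to a positive functional. -/
noncomputable def nuSq (τ : A →ₗ[ℂ] ℂ) (a : A) : ℝ := (τ (star a * a)).re

variable (τ : A →ₗ[ℂ] ℂ)

lemma nuSq_nonneg (hpos : ∀ a : A, 0 ≤ τ (star a * a)) (a : A) : 0 ≤ nuSq τ a :=
  (Complex.nonneg_iff.mp (hpos a)).1

lemma tau_star_mul_self_eq (hpos : ∀ a : A, 0 ≤ τ (star a * a)) (a : A) :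
    τ (star a * a) = (nuSq τ a : ℂ) := by
  have h := Complex.nonneg_iff.mp (hpos a)
  exact Complex.ext (by simp [nuSq]) (by simp [← h.2])

lemma nuSq_zero : nuSq τ 0 = 0 := by simp [nuSq]

lemma nuSq_neg (a : A) : nuSq τ (-a) = nuSq τ a := by simp [nuSq]

lemma tau_nonneg (hpos : ∀ a : A, 0 ≤ τ (star a * a)) {c : A} (hc : 0 ≤ c) :
    0 ≤ τ c := by
  rw [StarOrderedRing.nonneg_iff] at hc
  induction hc using AddSubmonoid.closure_induction with
  | mem x hx => obtain ⟨s, rfl⟩ := hx; exact hpos s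
  | zero => simp
  | add x y hx hy hx' hy' => rw [map_add]; exact add_nonneg hx' hy'

lemma tau_re_mono (hpos : ∀ a : A, 0 ≤ τ (star a * a)) {a b : A} (h : a ≤ b) :
    (τ a).re ≤ (τ b).re := by
  have h0 : 0 ≤ τ (b - a) := tau_nonneg τ hpos (sub_nonneg.mpr h)
  have h1 : τ b = τ a + τ (b - a) := by rw [← map_add]; congr 1; abel
  have h2 := (Complex.nonneg_iff.mp h0).1
  rw [h1, Complex.add_re]; linarith

lemma tau_algebraMap (hτ1 : τ 1 = 1) (c : ℝ) : τ (algebraMap ℝ A c) = (c : ℂ) := by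
  rw [IsScalarTower.algebraMap_apply ℝ ℂ A, Algebra.algebraMap_eq_smul_one, map_smul, hτ1,
    smul_eq_mul, mul_one]
  rfl

lemma nuSq_le_sq_norm (hτ1 : τ 1 = 1) (hpos : ∀ a : A, 0 ≤ τ (star a * a)) (a : A) :
    nuSq τ a ≤ ‖a‖ ^ 2 := by
  have h2 := tau_re_mono τ hpos (CStarAlgebra.star_mul_le_algebraMap_norm_sq (a := a))
  rwa [tau_algebraMap τ hτ1, Complex.ofReal_re] at h2

lemma nuSq_mul_le_left (hpos : ∀ a : A, 0 ≤ τ (star a * a)) (a b : A) :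
    nuSq τ (a * b) ≤ ‖a‖ ^ 2 * nuSq τ b := by
  have h0 : star (a * b) * (a * b) = star b * (star a * a) * b := by
    simp [star_mul, mul_assoc]
  have h1 : star b * (star a * a) * b ≤ ‖a‖ ^ 2 • (star b * b) := by
    have := star_left_conjugate_le_conjugate
      (CStarAlgebra.star_mul_le_algebraMap_norm_sq (a := a)) b
    rwa [Algebra.algebraMap_eq_smul_one, mul_smul_comm, smul_mul_assoc, mul_one] at this
  have h2 := tau_re_mono τ hpos h1
  rw [τ.map_smul_of_tower] at h2
  calc nuSq τ (a * b) = (τ (star b * (star a * a) * b)).re := by rw [nuSq, h0]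
    _ ≤ _ := h2
    _ = ‖a‖ ^ 2 * nuSq τ b := by
      simp only [Complex.real_smul, ← Complex.ofReal_pow, Complex.re_ofReal_mul, nuSq]

lemma nuSq_mul_le_right (hpos : ∀ a : A, 0 ≤ τ (star a * a))
    (htr : ∀ a b : A, τ (a * b) = τ (b * a)) (a b : A) :
    nuSq τ (a * b) ≤ ‖b‖ ^ 2 * nuSq τ a := by
  have h0 : τ (star (a * b) * (a * b)) = τ (a * (b * star b) * star a) := by
    rw [star_mul, htr (star b * star a) (a * b)]
    congr 1
    noncomm_ring
  have h1 : a * (b * star b) * star a ≤ ‖b‖ ^ 2 • (a * star a) := by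
    have := star_left_conjugate_le_conjugate
      (CStarAlgebra.mul_star_le_algebraMap_norm_sq (a := b)) (star a)
    rwa [Algebra.algebraMap_eq_smul_one, mul_smul_comm, smul_mul_assoc, mul_one, star_star]
      at this
  have h2 := tau_re_mono τ hpos h1
  rw [τ.map_smul_of_tower] at h2
  calc nuSq τ (a * b) = (τ (a * (b * star b) * star a)).re := by rw [nuSq, h0]
    _ ≤ (‖b‖ ^ 2 • τ (a * star a)).re := h2
    _ = ‖b‖ ^ 2 * nuSq τ a := by
      rw [htr a (star a)]
      simp only [Complex.real_smul, ← Complex.ofReal_pow, Complex.re_ofReal_mul, nuSq]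

lemma nuSq_add_le (hpos : ∀ a : A, 0 ≤ τ (star a * a)) (a b : A) :
    nuSq τ (a + b) ≤ 2 * nuSq τ a + 2 * nuSq τ b := by
  have key : (star a * a + star a * a + (star b * b + star b * b)) - star (a + b) * (a + b)
      = star (a - b) * (a - b) := by
    simp only [star_add, star_sub]
    noncomm_ring
  have h1 : star (a + b) * (a + b) ≤ star a * a + star a * a + (star b * b + star b * b) :=
    sub_nonneg.mp (key ▸ star_mul_self_nonneg (a - b))
  have h2 := tau_re_mono τ hpos h1
  simp only [map_add, Complex.add_re] at h2
  simp only [nuSq] at h2 ⊢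
  linarith

lemma nuSq_pos (hpos : ∀ a : A, 0 ≤ τ (star a * a))
    (hfaithful : ∀ a : A, τ (star a * a) = 0 → a = 0) {a : A} (ha : a ≠ 0) :
    0 < nuSq τ a := by
  rcases (nuSq_nonneg τ hpos a).lt_or_eq with h | h
  · exact h
  · exact absurd (hfaithful a (by rw [tau_star_mul_self_eq τ hpos a, ← h]; simp)) ha

end NuAux
section PolyAux

open Polynomial

variable {A : Type*} [CStarAlgebra A] [PartialOrder A] [StarOrderedRing A]
variable (τ : A →ₗ[ℂ] ℂ)

lemma poly_nuSq_bound (hτ1 : τ 1 = 1) (hpos : ∀ a : A, 0 ≤ τ (star a * a))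
    (htr : ∀ a b : A, τ (a * b) = τ (b * a))
    (r : ℝ) (hr : 0 < r) (p : ℝ[X]) :
    ∃ C : ℝ, 0 ≤ C ∧ ∀ y z : A, ‖y‖ ≤ r → ‖z‖ ≤ r →
      ‖(aeval y p : A)‖ ≤ C ∧
      nuSq τ (aeval y p - aeval z p) ≤ C * nuSq τ (y - z) := by
  haveI : Nontrivial A := nontrivial_of_ne 1 0
    (fun h => by rw [h, map_zero] at hτ1; exact one_ne_zero hτ1.symm)
  induction p using Polynomial.induction_on with
  | C c =>
      refine ⟨|c|, abs_nonneg c, fun y z hy hz => ⟨?_, ?_⟩⟩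
      · simpa using (norm_algebraMap' A c).le
      · have h0 : (aeval y (C c) : A) - aeval z (C c) = 0 := by simp
        rw [h0, nuSq_zero]
        exact mul_nonneg (abs_nonneg c) (nuSq_nonneg τ hpos _)
  | add p q hp hq =>
      obtain ⟨Cp, hCp0, hp⟩ := hp
      obtain ⟨Cq, hCq0, hq⟩ := hq
      refine ⟨2 * Cp + 2 * Cq, by positivity, fun y z hy hz => ?_⟩
      obtain ⟨h1, h2⟩ := hp y z hy hz
      obtain ⟨h3, h4⟩ := hq y z hy hz
      have hν0 := nuSq_nonneg τ hpos (y - z)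
      constructor
      · rw [map_add]
        calc ‖(aeval y p : A) + aeval y q‖ ≤ ‖(aeval y p : A)‖ + ‖(aeval y q : A)‖ :=
              norm_add_le _ _
          _ ≤ 2 * Cp + 2 * Cq := by linarith
      · have harr : (aeval y (p + q) : A) - aeval z (p + q)
            = ((aeval y p : A) - aeval z p) + ((aeval y q : A) - aeval z q) := by
          simp only [map_add]; abel
        rw [harr]
        have := nuSq_add_le τ hpos ((aeval y p : A) - aeval z p) ((aeval y q : A) - aeval z q)
        linarith
  | monomial n c ih =>
      obtain ⟨Cq, hCq0, hq⟩ := ih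
      refine ⟨Cq * r + 2 * Cq ^ 2 + 2 * r ^ 2 * Cq, by positivity, fun y z hy hz => ?_⟩
      have hrw : ∀ w : A, (aeval w (C c * X ^ (n + 1)) : A) = aeval w (C c * X ^ n) * w := by
        intro w
        rw [pow_succ, ← mul_assoc, map_mul, aeval_X]
      obtain ⟨h1, h2⟩ := hq y z hy hz
      obtain ⟨h1z, _⟩ := hq z y hz hy
      set Qy := (aeval y (C c * X ^ n) : A) with hQy
      set Qz := (aeval z (C c * X ^ n) : A) with hQz
      have hν0 := nuSq_nonneg τ hpos (y - z)
      have hν1 := nuSq_nonneg τ hpos (Qy - Qz)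
      constructor
      · rw [hrw y]
        calc ‖Qy * y‖ ≤ ‖Qy‖ * ‖y‖ := norm_mul_le _ _
          _ ≤ Cq * r := by
              apply mul_le_mul h1 hy (norm_nonneg y) hCq0
          _ ≤ Cq * r + 2 * Cq ^ 2 + 2 * r ^ 2 * Cq := by nlinarith
      · rw [hrw y, hrw z]
        have split : Qy * y - Qz * z = Qy * (y - z) + (Qy - Qz) * z := by noncomm_ring
        rw [split]
        have t1 := nuSq_add_le τ hpos (Qy * (y - z)) ((Qy - Qz) * z)
        have t2 := nuSq_mul_le_left τ hpos Qy (y - z)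
        have t3 := nuSq_mul_le_right τ hpos htr (Qy - Qz) z
        have e1 : ‖Qy‖ ^ 2 * nuSq τ (y - z) ≤ Cq ^ 2 * nuSq τ (y - z) := by
          apply mul_le_mul_of_nonneg_right _ hν0
          nlinarith [norm_nonneg Qy]
        have e2 : ‖z‖ ^ 2 * nuSq τ (Qy - Qz) ≤ r ^ 2 * (Cq * nuSq τ (y - z)) := by
          have hz2 : ‖z‖ ^ 2 ≤ r ^ 2 := by nlinarith [norm_nonneg z]
          calc ‖z‖ ^ 2 * nuSq τ (Qy - Qz) ≤ r ^ 2 * nuSq τ (Qy - Qz) :=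
                mul_le_mul_of_nonneg_right hz2 hν1
            _ ≤ r ^ 2 * (Cq * nuSq τ (y - z)) := by
                apply mul_le_mul_of_nonneg_left h2 (by positivity)
        have hcr : 0 ≤ Cq * r * nuSq τ (y - z) := by positivity
        nlinarith

end PolyAux
section CoreAux

open Polynomial

variable {A : Type*} [CStarAlgebra A] [PartialOrder A] [StarOrderedRing A]

lemma spec_meets (τ : A →ₗ[ℂ] ℂ) (hτ1 : τ 1 = 1)
    (hpos : ∀ a : A, 0 ≤ τ (star a * a))
    (htr : ∀ a b : A, τ (a * b) = τ (b * a))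
    (hfaithful : ∀ a : A, τ (star a * a) = 0 → a = 0)
    (r : ℝ) (hr : 0 < r)
    (x : ℕ → A) (hx : ∀ n, IsSelfAdjoint (x n)) (hxr : ∀ n, ‖x n‖ ≤ r)
    (xlim : A) (hxlim : IsSelfAdjoint xlim) (hxlimr : ‖xlim‖ ≤ r)
    (hconv : Tendsto (fun n => τ (star (x n - xlim) * (x n - xlim))) atTop (nhds 0))
    (l : ℝ) (hl : l ∈ spectrum ℝ xlim) (ε : ℝ) (hε : 0 < ε) :
    ∃ N : ℕ, ∀ n ≥ N, (spectrum ℝ (x n) ∩ Set.Ioo (l - ε) (l + ε)).Nonempty := by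
  haveI : Nontrivial A := nontrivial_of_ne 1 0
    (fun h => by rw [h, map_zero] at hτ1; exact one_ne_zero hτ1.symm)
  -- the bump function
  set f : ℝ → ℝ := fun t => max 0 (1 - |t - l| / ε) with hfdef
  have hf : Continuous f := by
    apply continuous_const.max
    fun_prop
  have hfl : f l = 1 := by simp [hfdef]
  -- spectra are contained in [-r, r]
  have hspec : ∀ a : A, ‖a‖ ≤ r → ∀ t ∈ spectrum ℝ a, t ∈ Set.Icc (-r) r := by
    intro a ha t ht
    have h1 : |t| ≤ r := by
      have := spectrum.norm_le_norm_of_mem ht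
      rw [Real.norm_eq_abs] at this
      linarith
    exact Set.mem_Icc.mpr (abs_le.mp h1)
  -- cfc f xlim is nonzero
  have hFne : cfc f xlim ≠ 0 := by
    intro h0
    have h1 : (1 : ℝ) ∈ spectrum ℝ (cfc f xlim) := by
      rw [cfc_map_spectrum f xlim (ha := hxlim) (hf := hf.continuousOn)]
      exact ⟨l, hl, hfl⟩
    rw [h0, spectrum.zero_eq] at h1
    exact one_ne_zero (Set.eq_of_mem_singleton h1)
  set δ := nuSq τ (cfc f xlim) with hδdef
  have hδ : 0 < δ := nuSq_pos τ hpos hfaithful hFne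
  set η := Real.sqrt (δ / 48) with hηdef
  have hη : 0 < η := Real.sqrt_pos.mpr (by linarith)
  have hη2 : η ^ 2 = δ / 48 := Real.sq_sqrt (by linarith)
  -- polynomial approximation
  obtain ⟨p, hp⟩ := exists_polynomial_near_of_continuousOn (-r) r f hf.continuousOn η hη
  obtain ⟨Cp, hCp0, hCp⟩ := poly_nuSq_bound τ hτ1 hpos htr r hr p
  -- cfc f a is close to aeval a p in operator norm
  have hclose : ∀ a : A, IsSelfAdjoint a → ‖a‖ ≤ r → ‖cfc f a - aeval a p‖ ≤ η := by
    intro a ha har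
    rw [← cfc_polynomial p a ha,
      ← cfc_sub f (fun t => p.eval t) a hf.continuousOn (by fun_prop)]
    apply norm_cfc_le hη.le
    intro t ht
    have := hp t (hspec a har t ht)
    rw [Real.norm_eq_abs, abs_sub_comm]
    exact this.le
  -- 2-norm convergence in real form
  have hν : Tendsto (fun n => nuSq τ (x n - xlim)) atTop (nhds 0) := by
    have := (Complex.continuous_re.tendsto (0 : ℂ)).comp hconv
    simpa [nuSq, Function.comp_def] using this
  have hev : ∀ᶠ n in atTop, Cp * nuSq τ (x n - xlim) < δ / 32 := by
    have h1 : Tendsto (fun n => Cp * nuSq τ (x n - xlim)) atTop (nhds 0) := by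
      simpa using hν.const_mul Cp
    exact h1.eventually_lt_const (by linarith)
  obtain ⟨N, hN⟩ := eventually_atTop.mp hev
  refine ⟨N, fun n hn => ?_⟩
  -- the key lower bound: nuSq τ (cfc f (x n)) > 0
  have hpos_n : 0 < nuSq τ (cfc f (x n)) := by
    set Fn := cfc f (x n) with hFn
    set F := cfc f xlim with hF
    set Pn := (aeval (x n) p : A) with hPn
    set P := (aeval xlim p : A) with hP
    have e1 : nuSq τ (F - P) ≤ η ^ 2 := by
      have h1 := hclose xlim hxlim hxlimr
      have := nuSq_le_sq_norm τ hτ1 hpos (F - P)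
      nlinarith [norm_nonneg (F - P)]
    have e2 : nuSq τ (Pn - Fn) ≤ η ^ 2 := by
      have h1 := hclose (x n) (hx n) (hxr n)
      rw [norm_sub_rev] at h1
      have := nuSq_le_sq_norm τ hτ1 hpos (Pn - Fn)
      nlinarith [norm_nonneg (Pn - Fn)]
    have e3 : nuSq τ (P - Pn) ≤ Cp * nuSq τ (x n - xlim) := by
      have := (hCp xlim (x n) hxlimr (hxr n)).2
      rwa [show xlim - x n = -(x n - xlim) by abel, nuSq_neg] at this
    have e4 : Cp * nuSq τ (x n - xlim) < δ / 32 := hN n hn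
    have d1 : F = Fn + (((F - P) + (P - Pn)) + (Pn - Fn)) := by abel
    have t1 : nuSq τ F ≤ 2 * nuSq τ Fn + 2 * nuSq τ (((F - P) + (P - Pn)) + (Pn - Fn)) := by
      calc nuSq τ F = nuSq τ (Fn + (((F - P) + (P - Pn)) + (Pn - Fn))) := congrArg (nuSq τ) d1
        _ ≤ _ := nuSq_add_le τ hpos _ _
    have t2 := nuSq_add_le τ hpos ((F - P) + (P - Pn)) (Pn - Fn)
    have t3 := nuSq_add_le τ hpos (F - P) (P - Pn)
    have hδF : nuSq τ F = δ := rfl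
    -- combine: δ ≤ 2 ν Fn + 12 η² + 8 Cp νn
    nlinarith [nuSq_nonneg τ hpos Fn]
  -- conclude: spectrum must meet the interval
  by_contra hempty
  rw [Set.not_nonempty_iff_eq_empty] at hempty
  have hf0 : (spectrum ℝ (x n)).EqOn f (fun _ => (0 : ℝ)) := by
    intro t ht
    have htno : t ∉ Set.Ioo (l - ε) (l + ε) := by
      intro hmem
      exact Set.eq_empty_iff_forall_notMem.mp hempty t ⟨ht, hmem⟩
    rw [Set.mem_Ioo] at htno
    push_neg at htno
    have habs : ε ≤ |t - l| := by
      by_contra h'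
      push_neg at h'
      obtain ⟨h1, h2⟩ := abs_sub_lt_iff.mp h'
      rcases le_or_gt (l - ε) t with h3 | h3
      · rcases lt_or_ge t (l + ε) with h4 | h4
        · linarith [htno (by linarith) ]
        · linarith
      · linarith
    show max 0 (1 - |t - l| / ε) = 0
    apply max_eq_left
    rw [sub_nonpos, le_div_iff₀ hε]
    linarith
  have hzero : cfc f (x n) = 0 := by
    rw [cfc_congr hf0]
    exact cfc_zero ℝ (x n)
  rw [hzero] at hpos_n
  rw [nuSq_zero] at hpos_n
  exact lt_irrefl 0 hpos_n

end CoreAux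

/-- If self-adjoint elements `x n` converge to `x` in the 2-norm of a faithful
tracial state, with uniform norm bound, and `λ₁, λ₂, λ₃` are distinct points of
the spectrum of `x`, then eventually the spectrum of `x n` meets each interval
`(λᵢ − ε, λᵢ + ε)`; in particular, if `ε < (1/2)·min_{i≠j}|λᵢ−λⱼ|`, then
`σ(x n)` eventually has at least three distinct points. -/
theorem spectrum_eventually_meets_intervals_of_tendsto_twoNorm
    {A : Type*} [CStarAlgebra A]
    (τ : A →ₗ[ℂ] ℂ) (hτ1 : τ 1 = 1)
    (hpos : ∀ a : A, 0 ≤ τ (star a * a))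
    (htr : ∀ a b : A, τ (a * b) = τ (b * a))
    (hfaithful : ∀ a : A, τ (star a * a) = 0 → a = 0)
    (r : ℝ) (hr : 0 < r)
    (x : ℕ → A) (hx : ∀ n, IsSelfAdjoint (x n)) (hxr : ∀ n, ‖x n‖ ≤ r)
    (xlim : A) (hxlim : IsSelfAdjoint xlim) (hxlimr : ‖xlim‖ ≤ r)
    (hconv : Tendsto (fun n => τ (star (x n - xlim) * (x n - xlim)))
      atTop (nhds 0))
    (l1 l2 l3 : ℝ) (hl1 : l1 ∈ spectrum ℝ xlim) (hl2 : l2 ∈ spectrum ℝ xlim)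
    (hl3 : l3 ∈ spectrum ℝ xlim)
    (h12 : l1 ≠ l2) (h13 : l1 ≠ l3) (h23 : l2 ≠ l3)
    (ε : ℝ) (hε : 0 < ε) :
    ∃ N : ℕ, ∀ n ≥ N,
      ((spectrum ℝ (x n) ∩ Set.Ioo (l1 - ε) (l1 + ε)).Nonempty ∧
       (spectrum ℝ (x n) ∩ Set.Ioo (l2 - ε) (l2 + ε)).Nonempty ∧
       (spectrum ℝ (x n) ∩ Set.Ioo (l3 - ε) (l3 + ε)).Nonempty) ∧
      (ε < (1/2) * min (min |l1 - l2| |l1 - l3|) |l2 - l3| →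
        ∃ a ∈ spectrum ℝ (x n), ∃ b ∈ spectrum ℝ (x n), ∃ c ∈ spectrum ℝ (x n),
          a ≠ b ∧ a ≠ c ∧ b ≠ c) := by
  letI : PartialOrder A := CStarAlgebra.spectralOrder A
  haveI : StarOrderedRing A := CStarAlgebra.spectralOrderedRing A
  obtain ⟨N1, hN1⟩ := spec_meets τ hτ1 hpos htr hfaithful r hr x hx hxr xlim hxlim hxlimr
    hconv l1 hl1 ε hε
  obtain ⟨N2, hN2⟩ := spec_meets τ hτ1 hpos htr hfaithful r hr x hx hxr xlim hxlim hxlimr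
    hconv l2 hl2 ε hε
  obtain ⟨N3, hN3⟩ := spec_meets τ hτ1 hpos htr hfaithful r hr x hx hxr xlim hxlim hxlimr
    hconv l3 hl3 ε hε
  refine ⟨max (max N1 N2) N3, fun n hn => ?_⟩
  have hn1 : N1 ≤ n := le_trans ((le_max_left N1 N2).trans (le_max_left _ N3)) hn
  have hn2 : N2 ≤ n := le_trans ((le_max_right N1 N2).trans (le_max_left _ N3)) hn
  have hn3 : N3 ≤ n := le_trans (le_max_right _ N3) hn
  refine ⟨⟨hN1 n hn1, hN2 n hn2, hN3 n hn3⟩, fun hsep => ?_⟩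
  obtain ⟨a, haspec, hamem⟩ := hN1 n hn1
  obtain ⟨b, hbspec, hbmem⟩ := hN2 n hn2
  obtain ⟨c, hcspec, hcmem⟩ := hN3 n hn3
  rw [Set.mem_Ioo] at hamem hbmem hcmem
  have m12 : 2 * ε < |l1 - l2| := by
    have h' : min (min |l1 - l2| |l1 - l3|) |l2 - l3| ≤ |l1 - l2| :=
      (min_le_left _ _).trans (min_le_left _ _)
    linarith
  have m13 : 2 * ε < |l1 - l3| := by
    have h' : min (min |l1 - l2| |l1 - l3|) |l2 - l3| ≤ |l1 - l3| :=
      (min_le_left _ _).trans (min_le_right _ _)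
    linarith
  have m23 : 2 * ε < |l2 - l3| := by
    have h' : min (min |l1 - l2| |l1 - l3|) |l2 - l3| ≤ |l2 - l3| := min_le_right _ _
    linarith
  refine ⟨a, haspec, b, hbspec, c, hcspec, ?_, ?_, ?_⟩
  · intro h
    subst h
    have : |l1 - l2| < 2 * ε := abs_sub_lt_iff.mpr ⟨by linarith, by linarith⟩
    linarith
  · intro h
    subst h
    have : |l1 - l3| < 2 * ε := abs_sub_lt_iff.mpr ⟨by linarith, by linarith⟩
    linarith
  · intro h
    subst h
    have : |l2 - l3| < 2 * ε := abs_sub_lt_iff.mpr ⟨by linarith, by linarith⟩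
    linarith
end

section
/- Let A be a unital C*-algebra and let τ be a tracial state on A. Let x, y ∈ A be self-adjoint and let f : ℝ → ℝ be Lipschitz with constant k ≥ 0 (i.e., |f(s) − f(t)| ≤ k|s − t| for all s, t ∈ ℝ). Then, writing ‖a‖₂ = (Re τ(a*a))^{1/2}, one has ‖cfc f x − cfc f y‖₂ ≤ k·‖x − y‖₂; equivalently, Re τ((cfc f x − cfc f y)*(cfc f x − cfc f y)) ≤ k²·Re τ((x − y)*(x − y)). -/
open scoped ComplexOrder

section KittanehAux

variable {A : Type*} [CStarAlgebra A]

lemma K_tau_star (τ : A →ₗ[ℂ] ℂ) (hpos : ∀ a : A, 0 ≤ τ (star a * a)) (a : A) :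
    τ (star a) = starRingEnd ℂ (τ a) := by
  have key : ∀ u v : A, (τ (star u * v)).im + (τ (star v * u)).im = 0 := by
    intro u v
    have h1 := hpos (u + v)
    have h2 := hpos u
    have h3 := hpos v
    rw [Complex.nonneg_iff] at h1 h2 h3
    have he : star (u + v) * (u + v) = star u * u + (star u * v + star v * u) + star v * v := by
      simp only [star_add, add_mul, mul_add]; abel
    rw [he] at h1
    simp only [map_add, Complex.add_im] at h1
    have := h1.2
    rw [← h2.2, ← h3.2] at this
    linarith
  have k1 := key 1 a
  have k2 := key 1 (Complex.I • a)
  simp only [star_one, one_mul, mul_one, map_smul, star_smul, Complex.star_def,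
    Complex.conj_I, neg_smul, map_neg, LinearMap.smul_apply, Complex.smul_im,
    Complex.neg_im, Complex.I_re, Complex.I_im] at k1 k2
  have hre : (τ a).re - (τ (star a)).re = 0 := by
    have k2' : (τ a).re + -(τ (star a)).re = 0 := by
      simpa [Complex.smul_re, Complex.smul_im] using k2
    linarith
  apply Complex.ext
  · simp [Complex.conj_re]; linarith
  · simp [Complex.conj_im]; linarith

variable [PartialOrder A] [StarOrderedRing A]

lemma K_tau_nonneg (τ : A →ₗ[ℂ] ℂ) (hpos : ∀ a : A, 0 ≤ τ (star a * a)) {d : A} (hd : 0 ≤ d) :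
    0 ≤ (τ d).re := by
  have h1 : CFC.sqrt d * CFC.sqrt d = d := CFC.sqrt_mul_sqrt_self d hd
  have h2 : star (CFC.sqrt d) = CFC.sqrt d :=
    (IsSelfAdjoint.of_nonneg (CFC.sqrt_nonneg d)).star_eq
  have := hpos (CFC.sqrt d)
  rw [h2, h1, Complex.nonneg_iff] at this
  exact this.1

lemma K_tau_le_norm (τ : A →ₗ[ℂ] ℂ) (hτ1 : τ 1 = 1)
    (hpos : ∀ a : A, 0 ≤ τ (star a * a)) {c : A}
    (hc : IsSelfAdjoint c) : |(τ c).re| ≤ ‖c‖ := by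
  have h1 : 0 ≤ (τ (algebraMap ℝ A ‖c‖ - c)).re :=
    K_tau_nonneg τ hpos (sub_nonneg.mpr hc.le_algebraMap_norm_self)
  have h2 : 0 ≤ (τ (c - (-(algebraMap ℝ A ‖c‖)))).re :=
    K_tau_nonneg τ hpos (sub_nonneg.mpr hc.neg_algebraMap_norm_le_self)
  have halg : (τ (algebraMap ℝ A ‖c‖)).re = ‖c‖ := by
    rw [Algebra.algebraMap_eq_smul_one]
    rw [show (‖c‖ : ℝ) • (1:A) = ((‖c‖ : ℂ)) • (1:A) by norm_cast]
    rw [map_smul, hτ1]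
    simp
  rw [map_sub, Complex.sub_re, halg] at h1
  rw [map_sub, map_neg, Complex.sub_re, Complex.neg_re, halg] at h2
  rw [abs_le]; constructor <;> linarith

lemma K_tau_mul_re_le (τ : A →ₗ[ℂ] ℂ) (hτ1 : τ 1 = 1)
    (hpos : ∀ a : A, 0 ≤ τ (star a * a))
    (htr : ∀ a b : A, τ (a * b) = τ (b * a)) {a b : A}
    (ha : IsSelfAdjoint a) (hb : IsSelfAdjoint b) :
    |(τ (a * b)).re| ≤ ‖a‖ * ‖b‖ := by
  have hsa : IsSelfAdjoint (a * b + b * a) := by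
    rw [IsSelfAdjoint, star_add, star_mul, star_mul, ha.star_eq, hb.star_eq, add_comm]
  have h1 : (τ (a * b)).re = (τ (a * b + b * a)).re / 2 := by
    rw [map_add, ← htr a b, Complex.add_re]; ring
  have h2 := K_tau_le_norm τ hτ1 hpos hsa
  have h3 : ‖a * b + b * a‖ ≤ 2 * (‖a‖ * ‖b‖) := by
    calc ‖a * b + b * a‖ ≤ ‖a * b‖ + ‖b * a‖ := norm_add_le _ _
      _ ≤ ‖a‖ * ‖b‖ + ‖b‖ * ‖a‖ := add_le_add (norm_mul_le _ _) (norm_mul_le _ _)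
      _ = 2 * (‖a‖ * ‖b‖) := by ring
  rw [h1, abs_div, abs_two, div_le_iff₀ (by norm_num : (0:ℝ) < 2), abs_le]
  rw [abs_le] at h2
  constructor <;> nlinarith [h2.1, h2.2, h3]

lemma K_tau_mul_nonneg (τ : A →ₗ[ℂ] ℂ) (hpos : ∀ a : A, 0 ≤ τ (star a * a))
    (htr : ∀ a b : A, τ (a * b) = τ (b * a)) {a b : A}
    (ha : 0 ≤ a) (hb : 0 ≤ b) : 0 ≤ (τ (a * b)).re := by
  have h1 : CFC.sqrt a * CFC.sqrt a = a := CFC.sqrt_mul_sqrt_self a ha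
  have hsa : IsSelfAdjoint (CFC.sqrt a) := IsSelfAdjoint.of_nonneg (CFC.sqrt_nonneg a)
  have key : τ (CFC.sqrt a * b * CFC.sqrt a) = τ (a * b) := by
    rw [htr, ← mul_assoc, h1]
  rw [← key]
  refine K_tau_nonneg τ hpos ?_
  have := star_left_conjugate_nonneg hb (CFC.sqrt a)
  rwa [hsa.star_eq] at this

lemma K_approx_prod_re (τ : A →ₗ[ℂ] ℂ) (hτ1 : τ 1 = 1)
    (hpos : ∀ a : A, 0 ≤ τ (star a * a))
    (htr : ∀ a b : A, τ (a * b) = τ (b * a)) {a b a' b' : A}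
    (ha : IsSelfAdjoint a) (hb : IsSelfAdjoint b)
    (ha' : IsSelfAdjoint a') (hb' : IsSelfAdjoint b') :
    |(τ (a * b)).re - (τ (a' * b')).re| ≤ ‖a - a'‖ * ‖b‖ + ‖a'‖ * ‖b - b'‖ := by
  have hsplit : a * b - a' * b' = (a - a') * b + a' * (b - b') := by noncomm_ring
  have h1 := K_tau_mul_re_le τ hτ1 hpos htr (ha.sub ha') hb
  have h2 := K_tau_mul_re_le τ hτ1 hpos htr ha' (hb.sub hb')
  have key : (τ (a * b)).re - (τ (a' * b')).re
      = (τ ((a - a') * b)).re + (τ (a' * (b - b'))).re := by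
    rw [← Complex.add_re, ← map_add, ← hsplit, map_sub, Complex.sub_re]
  rw [key]
  calc |(τ ((a - a') * b)).re + (τ (a' * (b - b'))).re|
      ≤ |(τ ((a - a') * b)).re| + |(τ (a' * (b - b'))).re| := abs_add_le _ _
    _ ≤ ‖a - a'‖ * ‖b‖ + ‖a'‖ * ‖b - b'‖ := add_le_add h1 h2

end KittanehAux

noncomputable def hatf (δ : ℝ) (m : ℤ) (s : ℝ) : ℝ := max 0 (1 - |s - m * δ| / δ)

lemma hatf_nonneg (δ : ℝ) (m : ℤ) (s : ℝ) : 0 ≤ hatf δ m s := le_max_left _ _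

lemma hatf_cont (δ : ℝ) (m : ℤ) : Continuous (hatf δ m) := by
  unfold hatf; fun_prop

lemma hatf_eq_zero {δ : ℝ} (hδ : 0 < δ) {m : ℤ} {s : ℝ} (h : δ ≤ |s - m * δ|) :
    hatf δ m s = 0 := by
  unfold hatf
  have : 1 ≤ |s - m * δ| / δ := (one_le_div hδ).mpr h
  exact max_eq_left (by linarith)

lemma hatf_ne_zero_close {δ : ℝ} (hδ : 0 < δ) {m : ℤ} {s : ℝ} (h : hatf δ m s ≠ 0) :
    |s - m * δ| ≤ δ := by
  by_contra hc
  exact h (hatf_eq_zero hδ (le_of_lt (lt_of_not_ge hc)))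

lemma hatf_sum_eq_one {δ : ℝ} (hδ : 0 < δ) {N : ℤ} (hN : 1 ≤ N) {s : ℝ}
    (hs : |s| ≤ N * δ) :
    ∑ m ∈ Finset.Icc (-N) N, hatf δ m s = 1 := by
  set m₀ : ℤ := min ⌊s / δ⌋ (N - 1) with hm₀
  have habs := abs_le.mp hs
  have hfl : (⌊s / δ⌋ : ℝ) ≤ s / δ := Int.floor_le _
  have hm₀le : (m₀ : ℝ) ≤ s / δ := by
    have : (m₀ : ℝ) ≤ (⌊s / δ⌋ : ℝ) := by exact_mod_cast min_le_left _ _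
    linarith
  have h1 : (m₀ : ℝ) * δ ≤ s := by
    have := mul_le_mul_of_nonneg_right hm₀le hδ.le
    rwa [div_mul_cancel₀ _ hδ.ne'] at this
  have h2 : s ≤ ((m₀ : ℝ) + 1) * δ := by
    rcases le_or_gt ⌊s / δ⌋ (N - 1) with hc | hc
    · have hm : m₀ = ⌊s / δ⌋ := min_eq_left hc
      have := (Int.lt_floor_add_one (s / δ)).le
      rw [hm]
      have := mul_le_mul_of_nonneg_right this hδ.le
      rwa [div_mul_cancel₀ _ hδ.ne'] at this
    · have hm : m₀ = N - 1 := min_eq_right (by omega)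
      rw [hm]
      push_cast
      linarith
  have hmem : m₀ ∈ Finset.Icc (-N) N ∧ m₀ + 1 ∈ Finset.Icc (-N) N := by
    have hl : -N ≤ m₀ := by
      rcases le_or_gt 0 s with hs0 | hs0
      · have : (0:ℤ) ≤ ⌊s / δ⌋ := Int.floor_nonneg.mpr (div_nonneg hs0 hδ.le)
        omega
      · have : (-N : ℝ) ≤ s / δ := by
          rw [le_div_iff₀ hδ]
          push_cast
          linarith
        have : (-N : ℤ) ≤ ⌊s / δ⌋ := Int.le_floor.mpr (by exact_mod_cast this)
        omega
    constructor <;> simp [Finset.mem_Icc] <;> omega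
  have hsub : ({m₀, m₀ + 1} : Finset ℤ) ⊆ Finset.Icc (-N) N := by
    intro m hm
    simp only [Finset.mem_insert, Finset.mem_singleton] at hm
    rcases hm with rfl | rfl
    exacts [hmem.1, hmem.2]
  rw [← Finset.sum_subset hsub ?_]
  · rw [Finset.sum_pair (by omega : m₀ ≠ m₀ + 1)]
    have e1 : hatf δ m₀ s = 1 - (s - m₀ * δ) / δ := by
      unfold hatf
      rw [abs_of_nonneg (by linarith)]
      refine max_eq_right ?_
      rw [sub_nonneg, div_le_one hδ]
      linarith
    have e2 : hatf δ (m₀ + 1) s = 1 - (((m₀ : ℝ) + 1) * δ - s) / δ := by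
      unfold hatf
      push_cast
      rw [abs_sub_comm, abs_of_nonneg (by linarith)]
      refine max_eq_right ?_
      rw [sub_nonneg, div_le_one hδ]
      linarith
    rw [e1, e2]
    field_simp
    ring
  · intro m hmI hmp
    simp only [Finset.mem_insert, Finset.mem_singleton, not_or] at hmp
    refine hatf_eq_zero hδ ?_
    rcases le_or_gt m m₀ with hcase | hcase
    · have hm : m ≤ m₀ - 1 := by omega
      have hmr : (m : ℝ) ≤ (m₀ : ℝ) - 1 := by
        have := (Int.cast_le (R := ℝ)).mpr hm
        push_cast at this
        linarith
      rw [abs_of_nonneg (by nlinarith)]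
      nlinarith
    · have hm : m₀ + 2 ≤ m := by omega
      have hmr : (m₀ : ℝ) + 2 ≤ (m : ℝ) := by
        have := (Int.cast_le (R := ℝ)).mpr hm
        push_cast at this
        linarith
      rw [abs_sub_comm, abs_of_nonneg (by nlinarith)]
      nlinarith

section KittanehCFC

variable {A : Type*} [CStarAlgebra A] {x : A}

lemma K_spec_abs_le (hx : IsSelfAdjoint x) {s : ℝ} (hs : s ∈ spectrum ℝ x) : |s| ≤ ‖x‖ := by
  rcases subsingleton_or_nontrivial A with hA | hA
  · rw [spectrum.mem_iff] at hs
    exact (hs (isUnit_of_subsingleton _)).elim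
  · simpa using spectrum.norm_le_norm_of_mem hs

lemma K_cfc_approx (hx : IsSelfAdjoint x) {δ : ℝ} (hδ : 0 < δ) {N : ℤ} (hN : 1 ≤ N)
    (hxb : ‖x‖ ≤ N * δ) (g : ℝ → ℝ) (hg : Continuous g) {ω : ℝ} (hω : 0 ≤ ω)
    (hmod : ∀ s ∈ spectrum ℝ x, ∀ m : ℤ, |s - m * δ| ≤ δ → |g s - g (m * δ)| ≤ ω) :
    ‖cfc g x - ∑ m ∈ Finset.Icc (-N) N, g (m * δ) • cfc (hatf δ m) x‖ ≤ ω := by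
  have hcont : ∀ m : ℤ, Continuous fun s => g (m * δ) • hatf δ m s :=
    fun m => by have := hatf_cont δ m; fun_prop
  have hrw : ∀ m : ℤ, g (m * δ) • cfc (hatf δ m) x = cfc (fun s => g (m * δ) • hatf δ m s) x :=
    fun m => (cfc_smul (g (m * δ)) (hatf δ m) x (hatf_cont δ m).continuousOn).symm
  simp only [hrw]
  rw [← cfc_sum (fun (m : ℤ) (s : ℝ) => g (m * δ) • hatf δ m s) x _
      (fun i _ => (hcont i).continuousOn)]
  have hsc : ContinuousOn (∑ i ∈ Finset.Icc (-N) N, fun s => g (↑i * δ) • hatf δ i s)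
      (spectrum ℝ x) := by
    have he : (∑ i ∈ Finset.Icc (-N) N, fun s => g (↑i * δ) • hatf δ i s)
        = fun s => ∑ i ∈ Finset.Icc (-N) N, g (↑i * δ) • hatf δ i s := by
      ext s; simp
    rw [he]
    exact (continuous_finset_sum _ fun i _ => hcont i).continuousOn
  rw [← cfc_sub _ _ x hg.continuousOn hsc]
  refine norm_cfc_le hω fun s hs => ?_
  have hsb : |s| ≤ N * δ := (K_spec_abs_le hx hs).trans hxb
  have hone := hatf_sum_eq_one hδ hN hsb
  simp only [Finset.sum_apply, smul_eq_mul]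
  rw [Real.norm_eq_abs]
  calc |g s - ∑ m ∈ Finset.Icc (-N) N, g (m * δ) * hatf δ m s|
      = |∑ m ∈ Finset.Icc (-N) N, hatf δ m s * (g s - g (m * δ))| := by
        congr 1
        simp only [mul_sub]
        rw [Finset.sum_sub_distrib, ← Finset.sum_mul, hone, one_mul]
        congr 1
        exact Finset.sum_congr rfl fun m _ => mul_comm _ _
    _ ≤ ∑ m ∈ Finset.Icc (-N) N, |hatf δ m s * (g s - g (m * δ))| :=
        Finset.abs_sum_le_sum_abs _ _
    _ ≤ ∑ m ∈ Finset.Icc (-N) N, hatf δ m s * ω := by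
        refine Finset.sum_le_sum fun m _ => ?_
        rw [abs_mul, abs_of_nonneg (hatf_nonneg δ m s)]
        rcases eq_or_ne (hatf δ m s) 0 with h0 | h0
        · simp [h0]
        · exact mul_le_mul_of_nonneg_left (hmod s hs m (hatf_ne_zero_close hδ h0))
            (hatf_nonneg δ m s)
    _ = ω := by rw [← Finset.sum_mul, hone, one_mul]

lemma K_bilin (τ : A →ₗ[ℂ] ℂ) (M : Finset ℤ) (u v : ℤ → ℝ) (p q : ℤ → A) :
    (τ ((∑ m ∈ M, u m • p m) * (∑ n ∈ M, v n • q n))).re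
      = ∑ m ∈ M, ∑ n ∈ M, u m * v n * (τ (p m * q n)).re := by
  rw [Finset.sum_mul_sum]
  have hz : ∀ m n : ℤ, (u m • p m) * (v n • q n) = (u m * v n) • (p m * q n) :=
    fun m n => smul_mul_smul_comm (u m) (p m) (v n) (q n)
  simp only [hz, map_sum, LinearMap.map_smul_of_tower, Complex.re_sum, Complex.smul_re,
    smul_eq_mul, mul_assoc]

end KittanehCFC

lemma K_sum6 {ι : Type*} (M : Finset ι) (a b c d e g : ι → ℝ) (k2 : ℝ) :
    k2 * ((∑ m ∈ M, a m) - 2 * (∑ m ∈ M, b m) + (∑ m ∈ M, c m))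
      - ((∑ m ∈ M, d m) - 2 * (∑ m ∈ M, e m) + (∑ m ∈ M, g m))
    = ∑ m ∈ M, (k2 * (a m - 2 * b m + c m) - (d m - 2 * e m + g m)) := by
  simp only [mul_sub, mul_add, Finset.sum_sub_distrib, Finset.sum_add_distrib, ← Finset.mul_sum]

set_option maxHeartbeats 4000000 in
/-- Tracial-state form of Kittaneh's Lipschitz estimate: for a tracial state
`τ` on a unital C*-algebra, self-adjoint `x, y`, and a `k`-Lipschitz function
`f : ℝ → ℝ`, one has `‖f(x) − f(y)‖₂ ≤ k·‖x − y‖₂`, where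
`‖a‖₂ = (Re τ(a*a))^{1/2}`; equivalently, the squared form of the same
inequality. -/
theorem twoNorm_cfc_sub_cfc_le_lipschitz_mul_twoNorm
    {A : Type*} [CStarAlgebra A]
    (τ : A →ₗ[ℂ] ℂ) (hτ1 : τ 1 = 1)
    (hpos : ∀ a : A, 0 ≤ τ (star a * a))
    (htr : ∀ a b : A, τ (a * b) = τ (b * a))
    (x y : A) (hx : IsSelfAdjoint x) (hy : IsSelfAdjoint y)
    (f : ℝ → ℝ) (k : ℝ) (hk : 0 ≤ k)
    (hf : ∀ s t : ℝ, |f s - f t| ≤ k * |s - t|) :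
    Real.sqrt ((τ (star (cfc f x - cfc f y) * (cfc f x - cfc f y))).re) ≤
        k * Real.sqrt ((τ (star (x - y) * (x - y))).re) ∧
      (τ (star (cfc f x - cfc f y) * (cfc f x - cfc f y))).re ≤
        k ^ 2 * (τ (star (x - y) * (x - y))).re := by
  letI : PartialOrder A := CStarAlgebra.spectralOrder A
  haveI : StarOrderedRing A := CStarAlgebra.spectralOrderedRing A
  have hfc : Continuous f := by
    have : LipschitzWith (Real.toNNReal k) f :=
      LipschitzWith.of_dist_le_mul fun s t => by
        rw [Real.dist_eq, Real.dist_eq, Real.coe_toNNReal k hk]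
        exact hf s t
    exact this.continuous
  have hfx : IsSelfAdjoint (cfc f x) := cfc_predicate f x
  have hfy : IsSelfAdjoint (cfc f y) := cfc_predicate f y
  have hΔ : IsSelfAdjoint (x - y) := hx.sub hy
  have hΔf : IsSelfAdjoint (cfc f x - cfc f y) := hfx.sub hfy
  rw [hΔ.star_eq, hΔf.star_eq]
  -- the squared inequality is the main content
  have main : (τ ((cfc f x - cfc f y) * (cfc f x - cfc f y))).re ≤
      k ^ 2 * (τ ((x - y) * (x - y))).re := by
    refine le_of_forall_sub_le fun ε hε => ?_
    obtain ⟨R, hRdef⟩ : ∃ r : ℝ, r = max ‖x‖ ‖y‖ := ⟨_, rfl⟩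
    have hxR : ‖x‖ ≤ R := by rw [hRdef]; exact le_max_left _ _
    have hyR : ‖y‖ ≤ R := by rw [hRdef]; exact le_max_right _ _
    have hR0 : 0 ≤ R := (norm_nonneg x).trans hxR
    obtain ⟨Bf, hBfdef⟩ : ∃ r : ℝ, r = |f 0| + k * (R + 1) := ⟨_, rfl⟩
    have hBf0 : 0 ≤ Bf := by
      rw [hBfdef]
      have h1 : 0 ≤ k * (R + 1) := mul_nonneg hk (by linarith only [hR0])
      linarith only [h1, abs_nonneg (f 0)]
    have hBfb : ∀ t : ℝ, |t| ≤ R + 1 → |f t| ≤ Bf := by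
      intro t ht
      have h1 : |f t - f 0| ≤ k * |t - 0| := hf t 0
      rw [sub_zero] at h1
      have h2 : |f t| ≤ |f t - f 0| + |f 0| := by
        calc |f t| = |(f t - f 0) + f 0| := by norm_num
          _ ≤ |f t - f 0| + |f 0| := abs_add_le _ _
      have hk' : k * |t| ≤ k * (R + 1) := mul_le_mul_of_nonneg_left ht hk
      rw [hBfdef]; linarith only [h1, h2, hk']
    obtain ⟨W, hWdef⟩ : ∃ r : ℝ, r = 1 + (2 * R + 2) + k + 2 * k * Bf := ⟨_, rfl⟩
    have hkBf : 0 ≤ k * Bf := mul_nonneg hk hBf0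
    have hW1 : 1 ≤ W := by rw [hWdef]; linarith only [hR0, hk, hkBf]
    have hW2 : 2 * R + 2 ≤ W := by rw [hWdef]; linarith only [hR0, hk, hkBf]
    have hW3 : k ≤ W := by rw [hWdef]; linarith only [hR0, hk, hkBf]
    have hW4 : 2 * k * Bf ≤ W := by rw [hWdef]; linarith only [hR0, hk, hkBf]
    have hW0 : 0 < W := lt_of_lt_of_le one_pos hW1
    obtain ⟨Nb, hNbdef⟩ : ∃ r : ℝ, r = 1 + R + R ^ 2 + Bf + Bf ^ 2 := ⟨_, rfl⟩
    have hsqR : 0 ≤ R ^ 2 := sq_nonneg R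
    have hsqBf : 0 ≤ Bf ^ 2 := sq_nonneg Bf
    have hNb0 : 0 < Nb := by rw [hNbdef]; linarith only [hsqR, hsqBf, hR0, hBf0]
    have hNb1 : 1 ≤ Nb := by rw [hNbdef]; linarith only [hsqR, hsqBf, hR0, hBf0]
    have hNb2 : R ≤ Nb := by rw [hNbdef]; linarith only [hsqR, hsqBf, hR0, hBf0]
    have hNb3 : R ^ 2 ≤ Nb := by rw [hNbdef]; linarith only [hsqR, hsqBf, hR0, hBf0]
    have hNb4 : Bf ≤ Nb := by rw [hNbdef]; linarith only [hsqR, hsqBf, hR0, hBf0]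
    have hNb5 : Bf ^ 2 ≤ Nb := by rw [hNbdef]; linarith only [hsqR, hsqBf, hR0, hBf0]
    obtain ⟨C, hCdef⟩ : ∃ r : ℝ, r = 4 * (k ^ 2 + 1) * W * (2 * Nb + W) := ⟨_, rfl⟩
    have hC0 : 0 < C := by
      rw [hCdef]
      have h1 : (0:ℝ) < 4 * (k ^ 2 + 1) := by positivity
      have h2 : (0:ℝ) < 2 * Nb + W := by linarith only [hNb0, hW0]
      exact mul_pos (mul_pos h1 hW0) h2
    obtain ⟨δ, hδdef⟩ : ∃ r : ℝ, r = min 1 (ε / C) := ⟨_, rfl⟩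
    have hδ0 : 0 < δ := by rw [hδdef]; exact lt_min one_pos (div_pos hε hC0)
    have hδ1 : δ ≤ 1 := by rw [hδdef]; exact min_le_left _ _
    have hCδ : C * δ ≤ ε := by
      have h1 : δ ≤ ε / C := by rw [hδdef]; exact min_le_right _ _
      calc C * δ ≤ C * (ε / C) := mul_le_mul_of_nonneg_left h1 hC0.le
        _ = ε := mul_div_cancel₀ _ hC0.ne'
    obtain ⟨N, hNdef⟩ : ∃ n : ℤ, n = ⌈(R + 1) / δ⌉ := ⟨_, rfl⟩
    have hrδ : (1:ℝ) ≤ (R + 1) / δ := (le_div_iff₀ hδ0).mpr (by linarith only [hδ1, hR0])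
    have hN1 : 1 ≤ N := by
      rw [hNdef]
      have := hrδ.trans (Int.le_ceil ((R + 1) / δ))
      exact_mod_cast this
    have hNδ : R + 1 ≤ N * δ := by
      have h1 : (R + 1) / δ ≤ (N : ℝ) := by rw [hNdef]; exact Int.le_ceil _
      calc R + 1 = ((R + 1) / δ) * δ := by field_simp
        _ ≤ (N : ℝ) * δ := mul_le_mul_of_nonneg_right h1 hδ0.le
    obtain ⟨M, hMdef⟩ : ∃ m : Finset ℤ, m = Finset.Icc (-N) N := ⟨_, rfl⟩
    have hWδ0 : 0 ≤ W * δ := (mul_pos hW0 hδ0).le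
    obtain ⟨one, honedef⟩ : ∃ g : ℝ → ℝ, g = fun _ => 1 := ⟨_, rfl⟩
    obtain ⟨idf, hidfdef⟩ : ∃ g : ℝ → ℝ, g = fun s => s := ⟨_, rfl⟩
    obtain ⟨sq, hsqdef⟩ : ∃ g : ℝ → ℝ, g = fun s => s * s := ⟨_, rfl⟩
    obtain ⟨f2, hf2def⟩ : ∃ g : ℝ → ℝ, g = fun s => f s * f s := ⟨_, rfl⟩
    -- moduli of continuity
    have habs_t : ∀ s t : ℝ, |s| ≤ R → |s - t| ≤ δ → |t| ≤ R + 1 := by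
      intro s t hs hst
      have h : |t| ≤ |s| + |s - t| := by
        calc |t| = |s - (s - t)| := by norm_num
          _ ≤ |s| + |s - t| := abs_sub _ _
      linarith only [h, hs, hst, hδ1]
    have hmod_one : ∀ s t : ℝ, |s| ≤ R → |s - t| ≤ δ → |one s - one t| ≤ W * δ := by
      intro s t _ _
      simp only [honedef, sub_self, abs_zero]
      exact hWδ0
    have hmod_id : ∀ s t : ℝ, |s| ≤ R → |s - t| ≤ δ → |idf s - idf t| ≤ W * δ := by
      intro s t _ h
      simp only [hidfdef]
      have h2 := mul_le_mul_of_nonneg_right hW1 hδ0.le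
      linarith only [h, h2]
    have hmod_sq : ∀ s t : ℝ, |s| ≤ R → |s - t| ≤ δ → |sq s - sq t| ≤ W * δ := by
      intro s t hs hst
      have ht := habs_t s t hs hst
      have hsum : |s + t| ≤ 2 * R + 2 := by
        calc |s + t| ≤ |s| + |t| := abs_add_le _ _
          _ ≤ 2 * R + 2 := by linarith only [hs, ht]
      have heq : |sq s - sq t| = |s - t| * |s + t| := by
        rw [hsqdef, ← abs_mul]
        congr 1
        ring
      rw [heq]
      have h1 : |s - t| * |s + t| ≤ δ * (2 * R + 2) :=
        mul_le_mul hst hsum (abs_nonneg _) hδ0.le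
      have h2 := mul_le_mul_of_nonneg_right hW2 hδ0.le
      linarith only [h1, h2]
    have hmod_f : ∀ s t : ℝ, |s| ≤ R → |s - t| ≤ δ → |f s - f t| ≤ W * δ := by
      intro s t _ hst
      have h1 := hf s t
      have h2 : k * |s - t| ≤ k * δ := mul_le_mul_of_nonneg_left hst hk
      have h3 := mul_le_mul_of_nonneg_right hW3 hδ0.le
      linarith only [h1, h2, h3]
    have hmod_f2 : ∀ s t : ℝ, |s| ≤ R → |s - t| ≤ δ → |f2 s - f2 t| ≤ W * δ := by
      intro s t hs hst
      have ht := habs_t s t hs hst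
      have hfs : |f s| ≤ Bf := hBfb s (by linarith only [hs])
      have hft : |f t| ≤ Bf := hBfb t ht
      have heq : |f2 s - f2 t| = |f s - f t| * |f s + f t| := by
        rw [hf2def, ← abs_mul]
        congr 1
        ring
      rw [heq]
      have h1 : |f s - f t| ≤ k * δ :=
        (hf s t).trans (mul_le_mul_of_nonneg_left hst hk)
      have h2 : |f s + f t| ≤ 2 * Bf := by
        calc |f s + f t| ≤ |f s| + |f t| := abs_add_le _ _
          _ ≤ 2 * Bf := by linarith only [hfs, hft]
      have h3 : |f s - f t| * |f s + f t| ≤ (k * δ) * (2 * Bf) :=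
        mul_le_mul h1 h2 (abs_nonneg _) (mul_nonneg hk hδ0.le)
      have h4 := mul_le_mul_of_nonneg_right hW4 hδ0.le
      have h5 : (k * δ) * (2 * Bf) = (2 * k * Bf) * δ := by ring
      linarith only [h3, h4, h5]
    -- pointwise bounds
    have hb_one : ∀ s : ℝ, |s| ≤ R → |one s| ≤ Nb := by
      intro s _
      simp only [honedef, abs_one]
      linarith only [hNb1]
    have hb_id : ∀ s : ℝ, |s| ≤ R → |idf s| ≤ Nb := by
      intro s hs
      simp only [hidfdef]
      linarith only [hs, hNb2]
    have hb_sq : ∀ s : ℝ, |s| ≤ R → |sq s| ≤ Nb := by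
      intro s hs
      have h : |sq s| = |s| * |s| := by rw [hsqdef, abs_mul]
      rw [h]
      have h2 : |s| * |s| ≤ R * R := mul_self_le_mul_self (abs_nonneg s) hs
      nlinarith [h2, hNb3]
    have hb_f : ∀ s : ℝ, |s| ≤ R → |f s| ≤ Nb := by
      intro s hs
      have h2 := hBfb s (by linarith only [hs])
      linarith only [h2, hNb4]
    have hb_f2 : ∀ s : ℝ, |s| ≤ R → |f2 s| ≤ Nb := by
      intro s hs
      have h1 := hBfb s (by linarith only [hs])
      have h : |f2 s| = |f s| * |f s| := by rw [hf2def, abs_mul]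
      rw [h]
      have h2 : |f s| * |f s| ≤ Bf * Bf := mul_self_le_mul_self (abs_nonneg (f s)) h1
      nlinarith [h2, hNb5]
    -- continuity
    have hc_one : Continuous one := by rw [honedef]; exact continuous_const
    have hc_id : Continuous idf := by rw [hidfdef]; exact continuous_id
    have hc_sq : Continuous sq := by rw [hsqdef]; exact continuous_id.mul continuous_id
    have hc_f2 : Continuous f2 := by rw [hf2def]; exact hfc.mul hfc
    -- approximation and norm bounds
    have happrox : ∀ z : A, IsSelfAdjoint z → ‖z‖ ≤ R →
        ∀ g : ℝ → ℝ, Continuous g →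
        (∀ s t : ℝ, |s| ≤ R → |s - t| ≤ δ → |g s - g t| ≤ W * δ) →
        ‖cfc g z - ∑ m ∈ M, g (m * δ) • cfc (hatf δ m) z‖ ≤ W * δ := by
      intro z hz hzR g hg hmod
      rw [hMdef]
      refine K_cfc_approx hz hδ0 hN1 (by linarith only [hNδ, hzR]) g hg hWδ0 ?_
      intro s hs m hm
      exact hmod s (m * δ) ((K_spec_abs_le hz hs).trans hzR) hm
    have hnormb : ∀ z : A, IsSelfAdjoint z → ‖z‖ ≤ R → ∀ g : ℝ → ℝ,
        (∀ s : ℝ, |s| ≤ R → |g s| ≤ Nb) → ‖cfc g z‖ ≤ Nb := by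
      intro z hz hzR g hb
      refine norm_cfc_le hNb0.le fun s hs => ?_
      rw [Real.norm_eq_abs]
      exact hb s ((K_spec_abs_le hz hs).trans hzR)
    have hPsa : ∀ z : A, ∀ g : ℝ → ℝ,
        IsSelfAdjoint (∑ m ∈ M, g (m * δ) • cfc (hatf δ m) z) := by
      intro z g
      rw [IsSelfAdjoint, star_sum]
      refine Finset.sum_congr rfl fun m _ => ?_
      rw [star_smul, star_trivial, (cfc_predicate (hatf δ m) z).star_eq]
    -- the discrete coefficients
    obtain ⟨c, hcdef⟩ : ∃ c : ℤ → ℤ → ℝ,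
        c = fun m n => (τ (cfc (hatf δ m) x * cfc (hatf δ n) y)).re := ⟨_, rfl⟩
    have hc0 : ∀ m n : ℤ, 0 ≤ c m n := by
      intro m n
      simp only [hcdef]
      exact K_tau_mul_nonneg τ hpos htr
        (cfc_nonneg fun s _ => hatf_nonneg δ m s)
        (cfc_nonneg fun s _ => hatf_nonneg δ n s)
    have hbil : ∀ g h : ℝ → ℝ,
        (τ ((∑ m ∈ M, g (m * δ) • cfc (hatf δ m) x) *
            (∑ n ∈ M, h (n * δ) • cfc (hatf δ n) y))).re
          = ∑ m ∈ M, ∑ n ∈ M, g (m * δ) * h (n * δ) * c m n := by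
      intro g h
      simp only [hcdef]
      exact K_bilin τ M (fun m => g (m * δ)) (fun n => h (n * δ))
        (fun m => cfc (hatf δ m) x) (fun n => cfc (hatf δ n) y)
    obtain ⟨eb, hebdef⟩ : ∃ r : ℝ, r = W * δ * Nb + (Nb + W * δ) * (W * δ) := ⟨_, rfl⟩
    -- uniform error estimate for each pair of functions
    have herr : ∀ g h : ℝ → ℝ, Continuous g → Continuous h →
        (∀ s t : ℝ, |s| ≤ R → |s - t| ≤ δ → |g s - g t| ≤ W * δ) →
        (∀ s t : ℝ, |s| ≤ R → |s - t| ≤ δ → |h s - h t| ≤ W * δ) →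
        (∀ s : ℝ, |s| ≤ R → |g s| ≤ Nb) →
        (∀ s : ℝ, |s| ≤ R → |h s| ≤ Nb) →
        |(τ (cfc g x * cfc h y)).re - ∑ m ∈ M, ∑ n ∈ M, g (m * δ) * h (n * δ) * c m n| ≤ eb := by
      intro g h hgc hhc hgm hhm hgb hhb
      rw [← hbil g h]
      have h1 : ‖cfc g x - ∑ m ∈ M, g (m * δ) • cfc (hatf δ m) x‖ ≤ W * δ :=
        happrox x hx hxR g hgc hgm
      have h2 : ‖cfc h y - ∑ n ∈ M, h (n * δ) • cfc (hatf δ n) y‖ ≤ W * δ :=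
        happrox y hy hyR h hhc hhm
      have h3 : ‖cfc h y‖ ≤ Nb := hnormb y hy hyR h hhb
      have h4 : ‖∑ m ∈ M, g (m * δ) • cfc (hatf δ m) x‖ ≤ Nb + W * δ := by
        have h5 : ‖cfc g x‖ ≤ Nb := hnormb x hx hxR g hgb
        have h6 : ‖∑ m ∈ M, g (m * δ) • cfc (hatf δ m) x‖
            ≤ ‖cfc g x‖ + ‖cfc g x - ∑ m ∈ M, g (m * δ) • cfc (hatf δ m) x‖ := by
          calc ‖∑ m ∈ M, g (m * δ) • cfc (hatf δ m) x‖
              = ‖cfc g x - (cfc g x - ∑ m ∈ M, g (m * δ) • cfc (hatf δ m) x)‖ := by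
                rw [sub_sub_cancel]
            _ ≤ ‖cfc g x‖ + ‖cfc g x - ∑ m ∈ M, g (m * δ) • cfc (hatf δ m) x‖ :=
                norm_sub_le _ _
        linarith only [h1, h5, h6]
      have key := K_approx_prod_re τ hτ1 hpos htr (cfc_predicate g x) (cfc_predicate h y)
        (hPsa x g) (hPsa y h)
      rw [hebdef]
      refine key.trans ?_
      have e1 : ‖cfc g x - ∑ m ∈ M, g (m * δ) • cfc (hatf δ m) x‖ * ‖cfc h y‖ ≤ W * δ * Nb :=
        mul_le_mul h1 h3 (norm_nonneg _) hWδ0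
      have e2 : ‖∑ m ∈ M, g (m * δ) • cfc (hatf δ m) x‖ *
          ‖cfc h y - ∑ n ∈ M, h (n * δ) • cfc (hatf δ n) y‖ ≤ (Nb + W * δ) * (W * δ) :=
        mul_le_mul h4 h2 (norm_nonneg _) (by linarith only [hNb0, hWδ0])
      linarith only [e1, e2]
    -- nonnegativity of the discrete Kittaneh sum
    have hF : ∀ s t : ℝ, (f s - f t) ^ 2 ≤ k ^ 2 * (s - t) ^ 2 := by
      intro s t
      have h1 := hf s t
      have h2 : |f s - f t| ^ 2 ≤ (k * |s - t|) ^ 2 := pow_le_pow_left₀ (abs_nonneg _) h1 2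
      rw [sq_abs] at h2
      calc (f s - f t) ^ 2 ≤ (k * |s - t|) ^ 2 := h2
        _ = k ^ 2 * (s - t) ^ 2 := by rw [mul_pow, sq_abs]
    have hS0 : 0 ≤ ∑ m ∈ M, ∑ n ∈ M,
        (k ^ 2 * ((m * δ : ℝ) - n * δ) ^ 2 - (f (m * δ) - f (n * δ)) ^ 2) * c m n :=
      Finset.sum_nonneg fun m _ => Finset.sum_nonneg fun n _ =>
        mul_nonneg (sub_nonneg.mpr (hF ((m : ℝ) * δ) ((n : ℝ) * δ))) (hc0 m n)
    -- merging the six double sums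
    have hEsum :
        k ^ 2 * ((∑ m ∈ M, ∑ n ∈ M, sq (m * δ) * one (n * δ) * c m n)
            - 2 * (∑ m ∈ M, ∑ n ∈ M, idf (m * δ) * idf (n * δ) * c m n)
            + (∑ m ∈ M, ∑ n ∈ M, one (m * δ) * sq (n * δ) * c m n))
          - ((∑ m ∈ M, ∑ n ∈ M, f2 (m * δ) * one (n * δ) * c m n)
            - 2 * (∑ m ∈ M, ∑ n ∈ M, f (m * δ) * f (n * δ) * c m n)
            + (∑ m ∈ M, ∑ n ∈ M, one (m * δ) * f2 (n * δ) * c m n))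
        = ∑ m ∈ M, ∑ n ∈ M,
            (k ^ 2 * ((m * δ : ℝ) - n * δ) ^ 2 - (f (m * δ) - f (n * δ)) ^ 2) * c m n := by
      rw [K_sum6]
      refine Finset.sum_congr rfl fun m _ => ?_
      rw [K_sum6]
      refine Finset.sum_congr rfl fun n _ => ?_
      simp only [honedef, hidfdef, hsqdef, hf2def]
      ring
    -- cfc computations
    have honex : cfc one x = 1 := by
      rw [honedef, cfc_const 1 x hx, map_one]
    have honey : cfc one y = 1 := by
      rw [honedef, cfc_const 1 y hy, map_one]
    have hidx : cfc idf x = x := by rw [hidfdef]; exact cfc_id' ℝ x hx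
    have hidy : cfc idf y = y := by rw [hidfdef]; exact cfc_id' ℝ y hy
    have hsqx : cfc sq x = x * x := by
      rw [hsqdef, cfc_mul (fun s : ℝ => s) (fun s : ℝ => s) x, cfc_id' ℝ x hx]
    have hsqy : cfc sq y = y * y := by
      rw [hsqdef, cfc_mul (fun s : ℝ => s) (fun s : ℝ => s) y, cfc_id' ℝ y hy]
    have hf2x : cfc f2 x = cfc f x * cfc f x := by
      rw [hf2def, cfc_mul f f x]
    have hf2y : cfc f2 y = cfc f y * cfc f y := by
      rw [hf2def, cfc_mul f f y]
    -- the six error bounds, in concrete form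
    have he1 : |(τ (x * x)).re - ∑ m ∈ M, ∑ n ∈ M, sq (m * δ) * one (n * δ) * c m n| ≤ eb := by
      have h := herr sq one hc_sq hc_one hmod_sq hmod_one hb_sq hb_one
      rwa [hsqx, honey, mul_one] at h
    have he2 : |(τ (x * y)).re - ∑ m ∈ M, ∑ n ∈ M, idf (m * δ) * idf (n * δ) * c m n| ≤ eb := by
      have h := herr idf idf hc_id hc_id hmod_id hmod_id hb_id hb_id
      rwa [hidx, hidy] at h
    have he3 : |(τ (y * y)).re - ∑ m ∈ M, ∑ n ∈ M, one (m * δ) * sq (n * δ) * c m n| ≤ eb := by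
      have h := herr one sq hc_one hc_sq hmod_one hmod_sq hb_one hb_sq
      rwa [honex, hsqy, one_mul] at h
    have he4 : |(τ (cfc f x * cfc f x)).re
        - ∑ m ∈ M, ∑ n ∈ M, f2 (m * δ) * one (n * δ) * c m n| ≤ eb := by
      have h := herr f2 one hc_f2 hc_one hmod_f2 hmod_one hb_f2 hb_one
      rwa [hf2x, honey, mul_one] at h
    have he5 : |(τ (cfc f x * cfc f y)).re
        - ∑ m ∈ M, ∑ n ∈ M, f (m * δ) * f (n * δ) * c m n| ≤ eb :=
      herr f f hfc hfc hmod_f hmod_f hb_f hb_f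
    have he6 : |(τ (cfc f y * cfc f y)).re
        - ∑ m ∈ M, ∑ n ∈ M, one (m * δ) * f2 (n * δ) * c m n| ≤ eb := by
      have h := herr one f2 hc_one hc_f2 hmod_one hmod_f2 hb_one hb_f2
      rwa [honex, hf2y, one_mul] at h
    -- expansion of the two quadratic quantities
    have hXexp : (τ ((x - y) * (x - y))).re
        = (τ (x * x)).re - 2 * (τ (x * y)).re + (τ (y * y)).re := by
      have hexp : (x - y) * (x - y) = x * x - x * y - (y * x - y * y) := by noncomm_ring
      rw [hexp, map_sub, map_sub, map_sub, htr y x]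
      simp only [Complex.sub_re]
      ring
    have hFexp : (τ ((cfc f x - cfc f y) * (cfc f x - cfc f y))).re
        = (τ (cfc f x * cfc f x)).re - 2 * (τ (cfc f x * cfc f y)).re
          + (τ (cfc f y * cfc f y)).re := by
      have hexp : (cfc f x - cfc f y) * (cfc f x - cfc f y)
          = cfc f x * cfc f x - cfc f x * cfc f y
            - (cfc f y * cfc f x - cfc f y * cfc f y) := by noncomm_ring
      rw [hexp, map_sub, map_sub, map_sub, htr (cfc f y) (cfc f x)]
      simp only [Complex.sub_re]
      ring
    -- final arithmetic
    have hk2 : (0:ℝ) ≤ k ^ 2 := sq_nonneg k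
    have hab1 := abs_le.mp he1
    have hab2 := abs_le.mp he2
    have hab3 := abs_le.mp he3
    have hab4 := abs_le.mp he4
    have hab5 := abs_le.mp he5
    have hab6 := abs_le.mp he6
    have heb0 : 0 ≤ eb := by
      rw [hebdef]
      have h1 : 0 ≤ W * δ * Nb := mul_nonneg hWδ0 hNb0.le
      have h2 : 0 ≤ (Nb + W * δ) * (W * δ) := mul_nonneg (by linarith only [hNb0, hWδ0]) hWδ0
      linarith only [h1, h2]
    have heb' : 4 * (k ^ 2 + 1) * eb ≤ C * δ := by
      have hWδW : W * δ ≤ W := by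
        calc W * δ ≤ W * 1 := mul_le_mul_of_nonneg_left hδ1 hW0.le
          _ = W := mul_one W
      have h1 : eb ≤ W * δ * (2 * Nb + W) := by
        rw [hebdef]
        have hp : (W * δ) * (W * δ) ≤ (W * δ) * W := mul_le_mul_of_nonneg_left hWδW hWδ0
        linarith only [hp]
      have h2 : 4 * (k ^ 2 + 1) * eb ≤ 4 * (k ^ 2 + 1) * (W * δ * (2 * Nb + W)) :=
        mul_le_mul_of_nonneg_left h1 (by positivity)
      have h3 : C * δ = 4 * (k ^ 2 + 1) * (W * δ * (2 * Nb + W)) := by rw [hCdef]; ring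
      linarith only [h2, h3]
    have hkey : (τ ((cfc f x - cfc f y) * (cfc f x - cfc f y))).re
        ≤ k ^ 2 * (τ ((x - y) * (x - y))).re + 4 * (k ^ 2 + 1) * eb := by
      rw [hFexp, hXexp]
      have hG : k ^ 2 * (((∑ m ∈ M, ∑ n ∈ M, sq (m * δ) * one (n * δ) * c m n)
              - 2 * (∑ m ∈ M, ∑ n ∈ M, idf (m * δ) * idf (n * δ) * c m n)
              + (∑ m ∈ M, ∑ n ∈ M, one (m * δ) * sq (n * δ) * c m n)) - 4 * eb)
          ≤ k ^ 2 * ((τ (x * x)).re - 2 * (τ (x * y)).re + (τ (y * y)).re) := by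
        apply mul_le_mul_of_nonneg_left _ hk2
        linarith only [hab1.1, hab2.2, hab3.1]
      linarith only [hG, hEsum, hab4.2, hab5.1, hab6.2, hS0, heb0]
    have hfinal : 4 * (k ^ 2 + 1) * eb ≤ ε := heb'.trans hCδ
    linarith only [hkey, hfinal]
  constructor
  · have h0 : 0 ≤ (τ ((x - y) * (x - y))).re := by
      have := K_tau_nonneg τ hpos (star_mul_self_nonneg (x - y))
      rwa [hΔ.star_eq] at this
    calc Real.sqrt ((τ ((cfc f x - cfc f y) * (cfc f x - cfc f y))).re)
        ≤ Real.sqrt (k ^ 2 * (τ ((x - y) * (x - y))).re) := Real.sqrt_le_sqrt main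
      _ = k * Real.sqrt ((τ ((x - y) * (x - y))).re) := by
          rw [Real.sqrt_mul (sq_nonneg k), Real.sqrt_sq hk]
  · exact main
end
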